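/- Over a finite field F_q of odd characteristic p, for any positive integers n and k, the identity F_{n p^k}(1,x) = (F_n(1,x))^{p^k} (1-4x)^{(p^k-1)/2} holds as functions on F_q (in fact on any extension field). -/

import Mathlib

def F3 {K : Type*} [Field K] (x : K) : ℕ → K
  | 0 => 0
  | 1 => 1
  | (n + 2) => F3 x (n + 1) - x * F3 x n

open Polynomial AdjoinRoot in
theorem stmt4 {K : Type*} [Field K] [Fintype K] (p : ℕ) (hp : p.Prime) (hodd : p ≠ 2)
    [CharP K p] (n k : ℕ) (hn : 0 < n) (hk : 0 < k) (x : K) :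
    F3 x (n * p ^ k) = (F3 x n) ^ (p ^ k) * (1 - 4 * x) ^ ((p ^ k - 1) / 2) := by
  haveI := Fact.mk hp
  have h2 : (2 : K) ≠ 0 := by
    have h : ((2:ℕ):K) ≠ 0 := by
      rw [Ne, CharP.cast_eq_zero_iff K p]
      exact fun h => hodd ((Nat.prime_dvd_prime_iff_eq hp Nat.prime_two).mp h)
    simpa using h
  -- oddness of p^k
  have hpodd : Odd p := hp.odd_of_ne_two hodd
  have hpk_odd : Odd (p ^ k) := hpodd.pow
  obtain ⟨m, hm⟩ := hpk_odd
  have hm2 : (p ^ k - 1) / 2 = m := by omega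
  have hpk0 : ((p : K)) = 0 := CharP.cast_eq_zero K p
  have hppos := hp.pos
  by_cases hD : (1 : K) - 4 * x = 0
  · -- degenerate case: 4x = 1
    have h4x : 4 * x = 1 := by linear_combination -hD
    have key : ∀ j : ℕ, 2 ^ j * F3 x j = 2 * j := by
      intro j
      induction j using Nat.strong_induction_on with
      | _ j ih =>
        match j with
        | 0 => simp [F3]
        | 1 => simp [F3]
        | (j+2) =>
          have h1 := ih (j+1) (by omega)
          have h0 := ih j (by omega)
          show 2 ^ (j+2) * (F3 x (j+1) - x * F3 x j) = 2 * (j+2 : ℕ)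
          push_cast
          push_cast at h1 h0
          linear_combination 2 * h1 - h0 - ((2:K)^j * F3 x j) * h4x
    have hL : F3 x (n * p ^ k) = 0 := by
      have := key (n * p ^ k)
      have hc : ((n * p ^ k : ℕ) : K) = 0 := by
        push_cast
        rw [hpk0]
        simp [zero_pow (by omega : k ≠ 0)]
      rw [hc, mul_zero] at this
      have h2p : (2:K) ^ (n * p ^ k) ≠ 0 := pow_ne_zero _ h2
      exact (mul_eq_zero.mp this).resolve_left h2p
    have hmpos : 0 < m := by
      have : 3 ≤ p := hp.two_le.lt_of_ne (Ne.symm hodd)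
      have : 3 ≤ p ^ k := le_trans this (Nat.le_self_pow (by omega) p)
      omega
    rw [hL, hD, hm2, zero_pow (by omega : m ≠ 0), mul_zero]
  · -- main case: work in AdjoinRoot (X^2 - X + C x)
    set f : K[X] := X ^ 2 - X + C x with hf
    have hdeg : f.degree = 2 := by
      simp only [hf]
      compute_degree!
    have hdeg0 : f.degree ≠ 0 := by rw [hdeg]; norm_num
    have hinj : Function.Injective (AdjoinRoot.of f) :=
      of.injective_of_degree_ne_zero hdeg0
    haveI : Nontrivial (AdjoinRoot f) := AdjoinRoot.nontrivial f hdeg0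
    haveI : CharP (AdjoinRoot f) p := charP_of_injective_ringHom hinj p
    set R := AdjoinRoot f
    set φ : K →+* R := AdjoinRoot.of f with hφ
    set a : R := root f with ha
    have haroot : a ^ 2 - a + φ x = 0 := by
      have := AdjoinRoot.eval₂_root f
      simpa [hf, eval₂_add, eval₂_sub, eval₂_pow, eval₂_X, eval₂_C] using this
    set b : R := 1 - a with hb
    have hab2 : (a - b) ^ 2 = φ (1 - 4 * x) := by
      rw [hb, map_sub, map_mul, map_one, map_ofNat]
      linear_combination (4 : R) * haroot
    -- key identity
    have key : ∀ j : ℕ, a ^ j - b ^ j = φ (F3 x j) * (a - b) := by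
      intro j
      induction j using Nat.strong_induction_on with
      | _ j ih =>
        match j with
        | 0 => simp [F3]
        | 1 => simp [F3]
        | (j+2) =>
          have h1 := ih (j+1) (by omega)
          have h0 := ih j (by omega)
          have hbroot : b ^ 2 - b + φ x = 0 := by
            rw [hb]; linear_combination haroot
          show a ^ (j+2) - b ^ (j+2) = φ (F3 x (j+1) - x * F3 x j) * (a - b)
          rw [map_sub, map_mul]
          have ea : a ^ (j+2) = a ^ (j+1) - φ x * a ^ j := by
            have : a ^ (j+2) = a ^ j * a ^ 2 := by ring
            rw [this]
            linear_combination a ^ j * haroot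
          have eb : b ^ (j+2) = b ^ (j+1) - φ x * b ^ j := by
            have : b ^ (j+2) = b ^ j * b ^ 2 := by ring
            rw [this]
            linear_combination b ^ j * hbroot
          rw [ea, eb]
          linear_combination h1 - φ x * h0
    have main : φ (F3 x (n * p ^ k)) * (a - b) =
        φ ((F3 x n) ^ (p ^ k) * (1 - 4 * x) ^ ((p ^ k - 1) / 2)) * (a - b) := by
      rw [← key]
      have e1 : a ^ (n * p ^ k) - b ^ (n * p ^ k) = (a ^ n - b ^ n) ^ (p ^ k) := by
        rw [sub_pow_char_pow, ← pow_mul, ← pow_mul]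
      rw [e1, key n, mul_pow, map_mul, map_pow, map_pow, ← hab2, hm2, hm,
        ← pow_mul (a - b) 2 m]
      ring
    -- cancel (a - b), using that (a-b)^2 = φ D is a unit
    have hDinv : φ (F3 x (n * p ^ k)) = φ ((F3 x n) ^ (p ^ k) * (1 - 4 * x) ^ ((p ^ k - 1) / 2)) := by
      have := congrArg (· * ((a - b) * φ ((1 - 4*x)⁻¹))) main
      have hcancel : (a - b) * ((a - b) * φ ((1 - 4*x)⁻¹)) = 1 := by
        have : (a - b) * (a - b) = φ (1 - 4 * x) := by rw [← sq, hab2]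
        rw [← mul_assoc, this, ← map_mul, mul_inv_cancel₀ hD, map_one]
      rw [mul_assoc, hcancel, mul_one, mul_assoc, hcancel, mul_one] at this
      exact this
    exact hinj hDinv
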